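/- For the middle tensor choice U = C^† * X * R^† in a cross tensor approximation X ≈ C*U*R, the Frobenius residual ‖X − C*U*R‖_F is minimized over all choices of middle tensor U, i.e., for every tensor Z of conforming size, ‖X − C*(C^†*X*R^†)*R‖_F ≤ ‖X − C*Z*R‖_F. -/
import Mathlib


open scoped BigOperators

namespace TProd

/-- A third-order tensor given by its frontal slices, indexed cyclically by `ZMod n`. -/
abbrev Tensor (a b n : ℕ) := ZMod n → Matrix (Fin a) (Fin b) ℝ

/-- The T-product of two third-order tensors (block-circulant construction:
`(X*Y)(k) = ∑ j, X(k−j) ⬝ Y(j)`). -/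
noncomputable def tprod {a b c n : ℕ} [NeZero n] (X : Tensor a b n) (Y : Tensor b c n) :
    Tensor a c n :=
  fun k => ∑ j : ZMod n, X (k - j) * Y j

/-- The tensor transpose: transpose each frontal slice and reverse the order of
slices 2 through n. -/
def ttrans {a b n : ℕ} (X : Tensor a b n) : Tensor b a n := fun k => (X (-k)).transpose

/-- The identity tensor: first frontal slice the identity matrix, all others zero. -/
def tid (a n : ℕ) : Tensor a a n := fun k => if k = 0 then 1 else 0

/-- Squared Frobenius norm of a tensor. -/
def frobSq {a b n : ℕ} [NeZero n] (X : Tensor a b n) : ℝ :=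
  ∑ k : ZMod n, ∑ i, ∑ j, (X k i j) ^ 2

/-- Frobenius norm of a tensor. -/
noncomputable def frobNorm {a b n : ℕ} [NeZero n] (X : Tensor a b n) : ℝ :=
  Real.sqrt (frobSq X)

/-- Mode-3 discrete Fourier transform: the i-th Fourier-domain frontal slice. -/
noncomputable def dft {a b n : ℕ} [NeZero n] (X : Tensor a b n) : ZMod n → Matrix (Fin a) (Fin b) ℂ :=
  fun i => ∑ k : ZMod n,
    Complex.exp (-2 * Real.pi * Complex.I * ((i.val : ℂ) * (k.val : ℂ)) / (n : ℂ)) •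
      (X k).map (fun x => (x : ℂ))

/-- A tensor is f-diagonal if all its frontal slices are diagonal matrices. -/
def fDiag {a b n : ℕ} (S : Tensor a b n) : Prop :=
  ∀ k : ZMod n, ∀ i : Fin a, ∀ j : Fin b, (i : ℕ) ≠ (j : ℕ) → S k i j = 0

/-- Orthogonality under the T-product. -/
def Orthogonal {a n : ℕ} [NeZero n] (U : Tensor a a n) : Prop :=
  tprod (ttrans U) U = tid a n ∧ tprod U (ttrans U) = tid a n

/-- The four tensor Penrose equations: `A` is a Moore–Penrose pseudoinverse of `X`. -/
def IsMP {a b n : ℕ} [NeZero n] (X : Tensor a b n) (A : Tensor b a n) : Prop :=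
  tprod (tprod A X) A = A ∧
  tprod (tprod X A) X = X ∧
  ttrans (tprod X A) = tprod X A ∧
  ttrans (tprod A X) = tprod A X

/-- The block-circulant matrix of a tensor. -/
def circ {a b n : ℕ} (X : Tensor a b n) :
    Matrix (ZMod n × Fin a) (ZMod n × Fin b) ℝ :=
  Matrix.of fun p q => X (p.1 - q.1) p.2 q.2

end TProd

open TProd

section Helpers

open TProd Matrix

variable {a b c d n : ℕ} [NeZero n]

/-- Reindexing double sums over `ZMod n` along an equivalence of pairs. -/
lemma sum_sum_equiv (e : ZMod n × ZMod n ≃ ZMod n × ZMod n) (f g : ZMod n → ZMod n → ℝ)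
    (h : ∀ x y, f x y = g (e (x, y)).1 (e (x, y)).2) :
    ∑ x : ZMod n, ∑ y : ZMod n, f x y = ∑ x : ZMod n, ∑ y : ZMod n, g x y := by
  rw [← Finset.sum_product', ← Finset.sum_product']
  rw [Finset.univ_product_univ]
  exact Fintype.sum_equiv e _ _ fun p => h p.1 p.2

/-- The involution `(k, l) ↦ (k - l, -l)` on `ZMod n × ZMod n`. -/
def reidx (n : ℕ) : (ZMod n × ZMod n) ≃ (ZMod n × ZMod n) where
  toFun p := (p.1 - p.2, -p.2)
  invFun p := (p.1 - p.2, -p.2)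
  left_inv p := by simp [sub_neg_eq_add, sub_add_cancel]
  right_inv p := by simp [sub_neg_eq_add, sub_add_cancel]

/-- The equivalence `(x, i) ↦ (x + i, x)` on `ZMod n × ZMod n`. -/
def reidx2 (n : ℕ) : (ZMod n × ZMod n) ≃ (ZMod n × ZMod n) where
  toFun p := (p.1 + p.2, p.1)
  invFun p := (p.2, p.1 - p.2)
  left_inv p := by simp
  right_inv p := by simp

lemma tprod_assoc (A : Tensor a b n) (B : Tensor b c n) (D : Tensor c d n) :
    tprod (tprod A B) D = tprod A (tprod B D) := by
  funext k
  simp only [TProd.tprod, Matrix.sum_mul, Matrix.mul_sum]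
  ext p q
  simp only [Matrix.sum_apply]
  refine sum_sum_equiv (reidx2 n) _ _ fun x i => ?_
  simp only [reidx2, Equiv.coe_fn_mk, add_sub_cancel_left]
  rw [Matrix.mul_assoc, sub_add_eq_sub_sub]

lemma tprod_sub_left (A B : Tensor a b n) (D : Tensor b c n) :
    tprod (A - B) D = tprod A D - tprod B D := by
  funext k
  simp [TProd.tprod, Matrix.sub_mul, Finset.sum_sub_distrib]

lemma tprod_sub_right (A : Tensor a b n) (B D : Tensor b c n) :
    tprod A (B - D) = tprod A B - tprod A D := by
  funext k
  simp [TProd.tprod, Matrix.mul_sub, Finset.sum_sub_distrib]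

/-- Entrywise inner product of tensors. -/
noncomputable def tinner (A B : Tensor a b n) : ℝ :=
  ∑ k : ZMod n, ∑ i, ∑ j, A k i j * B k i j

lemma tinner_eq_trace (A B : Tensor a b n) :
    tinner A B = ∑ k : ZMod n, ((A k)ᵀ * B k).trace := by
  unfold tinner
  refine Finset.sum_congr rfl fun k _ => ?_
  rw [Matrix.trace, Finset.sum_comm]
  simp [Matrix.diag, Matrix.mul_apply, Matrix.transpose_apply]

lemma frobSq_eq_tinner (A : Tensor a b n) : frobSq A = tinner A A := by
  simp [frobSq, tinner, sq]

lemma tinner_adj_left (U : Tensor a b n) (A : Tensor a c n) (M : Tensor b c n) :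
    tinner A (tprod U M) = tinner (tprod (ttrans U) A) M := by
  rw [tinner_eq_trace, tinner_eq_trace]
  simp only [TProd.tprod, Matrix.mul_sum, Matrix.sum_mul, Matrix.transpose_sum, Matrix.trace_sum]
  rw [Finset.sum_comm]
  refine Finset.sum_congr rfl fun l _ => Finset.sum_congr rfl fun k _ => ?_
  simp [ttrans, Matrix.transpose_mul, Matrix.mul_assoc, neg_sub]

lemma tinner_adj_right (Q : Tensor b c n) (A : Tensor a c n) (M : Tensor a b n) :
    tinner A (tprod M Q) = tinner (tprod A (ttrans Q)) M := by
  rw [tinner_eq_trace, tinner_eq_trace]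
  simp only [TProd.tprod, Matrix.mul_sum, Matrix.sum_mul, Matrix.transpose_sum, Matrix.trace_sum]
  refine sum_sum_equiv (reidx n) _ _ fun x i => ?_
  simp only [reidx, Equiv.coe_fn_mk, ttrans, neg_neg, Matrix.transpose_mul,
    Matrix.transpose_transpose, sub_neg_eq_add, sub_add_cancel]
  rw [Matrix.trace_mul_comm, Matrix.trace_mul_cycle, Matrix.trace_mul_cycle]

end Helpers

section Main

open TProd Matrix

variable {a b c n : ℕ} [NeZero n]

lemma frobSq_add (E D : Tensor a b n) :
    frobSq (E + D) = frobSq E + 2 * tinner E D + frobSq D := by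
  simp only [frobSq, tinner, Pi.add_apply, Matrix.add_apply, Finset.mul_sum,
    ← Finset.sum_add_distrib]
  exact Finset.sum_congr rfl fun k _ => Finset.sum_congr rfl fun i _ =>
    Finset.sum_congr rfl fun j _ => by ring

lemma frobSq_nonneg (A : Tensor a b n) : 0 ≤ frobSq A := by
  unfold frobSq; positivity

lemma proj_orth (P : Tensor a a n) (Q : Tensor b b n) (X W : Tensor a b n)
    (hPt : ttrans P = P) (hQt : ttrans Q = Q)
    (hPP : tprod P P = P) (hQQ : tprod Q Q = Q) :
    tinner (X - tprod P (tprod X Q)) (tprod P (tprod W Q)) = 0 := by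
  rw [tinner_adj_left, hPt, tprod_sub_right, ← tprod_assoc P P, hPP,
    tinner_adj_right, hQt, tprod_sub_left, tprod_assoc P X Q,
    tprod_assoc P (tprod X Q) Q, tprod_assoc X Q Q, hQQ, sub_self]
  simp [tinner]

end Main

/-- optimality of the middle tensor U = C† * X * R† in a cross
tensor approximation. -/
theorem cur_middle_optimal (I1 I2 I3 L K : ℕ) [NeZero I3]
    (X : Tensor I1 I2 I3) (C : Tensor I1 L I3) (R : Tensor K I2 I3)
    (Cp : Tensor L I1 I3) (Rp : Tensor I2 K I3)
    (hCp : IsMP C Cp) (hRp : IsMP R Rp) :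
    ∀ Z : Tensor L K I3,
      frobNorm (X - tprod (tprod C (tprod (tprod Cp X) Rp)) R) ≤
        frobNorm (X - tprod (tprod C Z) R) := by
  intro Z
  obtain ⟨hC1, hC2, hC3, hC4⟩ := hCp
  obtain ⟨hR1, hR2, hR3, hR4⟩ := hRp
  set P : Tensor I1 I1 I3 := tprod C Cp with hP
  set Q : Tensor I2 I2 I3 := tprod Rp R with hQ
  have hPt : ttrans P = P := hC3
  have hQt : ttrans Q = Q := hR4
  have hPC : tprod P C = C := hC2
  have hRQ : tprod R Q = R := by rw [hQ, ← tprod_assoc]; exact hR2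
  have hPP : tprod P P = P := by rw [hP, ← tprod_assoc (tprod C Cp) C Cp, hC2]
  have hQQ : tprod Q Q = Q := by
    rw [hQ, tprod_assoc Rp R (tprod Rp R), ← tprod_assoc R Rp R, hR2]
  have hM : tprod (tprod C (tprod (tprod Cp X) Rp)) R = tprod P (tprod X Q) := by
    rw [tprod_assoc C (tprod (tprod Cp X) Rp) R, tprod_assoc (tprod Cp X) Rp R,
      tprod_assoc Cp X (tprod Rp R), ← tprod_assoc C Cp (tprod X (tprod Rp R))]
  have key := proj_orth P Q X (X - tprod (tprod C Z) R) hPt hQt hPP hQQ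
  have hD : tprod P (tprod (X - tprod (tprod C Z) R) Q) =
      tprod P (tprod X Q) - tprod (tprod C Z) R := by
    rw [tprod_sub_left, tprod_sub_right]
    congr 1
    rw [tprod_assoc (tprod C Z) R Q, hRQ, ← tprod_assoc P (tprod C Z) R,
      ← tprod_assoc P C Z, hPC]
  have hsplit : X - tprod (tprod C Z) R =
      (X - tprod P (tprod X Q)) + tprod P (tprod (X - tprod (tprod C Z) R) Q) := by
    rw [hD]; abel
  rw [hM]
  unfold frobNorm
  refine Real.sqrt_le_sqrt ?_
  rw [hsplit, frobSq_add, key]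
  have h0 := frobSq_nonneg (tprod P (tprod (X - tprod (tprod C Z) R) Q))
  linarith
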